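/- Let Σ be a finite set with n = |Σ| ≥ 2, S ⊆ Σ a subset with 1 ≤ |S| = m ≤ n−1, and a ∈ Σ∖S. Then Σ_{X ⊆ Σ, a ∈ X, |X| ≥ 2, X∖{a} ⊆ S, X∖{a} ≠ ∅} ((|X|−1)!(n−|X|)!/n!) = 1/(n−m) − 1/n. -/

import Mathlib

open Finset

private lemma key_sum (n m : ℕ) (hmn : m < n) :
    ∑ k ∈ range (m + 1),
      ((m.choose k * k.factorial * (n - 1 - k).factorial : ℚ) / n.factorial) =
    1 / ((n - m : ℕ) : ℚ) := by
  have hnm0 : (0 : ℚ) < ((n - m : ℕ) : ℚ) := by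
    exact_mod_cast Nat.sub_pos_of_lt hmn
  set T : ℕ → ℚ := fun k => (m.descFactorial k * (n - k).factorial : ℚ) / n.factorial with hT
  have hstep : ∀ k ∈ range (m + 1),
      ((m.choose k * k.factorial * (n - 1 - k).factorial : ℚ) / n.factorial)
        = (T k - T (k + 1)) / ((n - m : ℕ) : ℚ) := by
    intro k hk
    rw [mem_range, Nat.lt_succ_iff] at hk
    have hkn : k < n := lt_of_le_of_lt hk hmn
    have h1 : m.descFactorial (k + 1) = (m - k) * m.descFactorial k :=
      Nat.descFactorial_succ m k
    have h2 : (n - k).factorial = (n - k) * (n - (k + 1)).factorial := by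
      have : n - k = (n - (k + 1)) + 1 := by omega
      rw [this, Nat.factorial_succ]
    have h3 : n - 1 - k = n - (k + 1) := by omega
    have h4 : (m.choose k * k.factorial : ℚ) = (m.descFactorial k : ℚ) := by
      rw [Nat.descFactorial_eq_factorial_mul_choose]; push_cast; ring
    rw [h3, hT]
    simp only
    rw [h1, h2]
    have hfac : (0 : ℚ) < (n.factorial : ℚ) := by exact_mod_cast n.factorial_pos
    field_simp
    have hnk : ((n - k : ℕ) : ℚ) = (n : ℚ) - k := by
      push_cast [Nat.cast_sub hkn.le]; ring
    have hmk : ((m - k : ℕ) : ℚ) = (m : ℚ) - k := by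
      push_cast [Nat.cast_sub hk]; ring
    have hnm : ((n - m : ℕ) : ℚ) = (n : ℚ) - m := by
      push_cast [Nat.cast_sub hmn.le]; ring
    push_cast [hnk, hmk, hnm] at *
    rw [← h4]
    ring
  rw [Finset.sum_congr rfl hstep, ← Finset.sum_div, Finset.sum_range_sub' T]
  have hT0 : T 0 = 1 := by
    simp [hT, Nat.descFactorial]
    exact n.factorial_ne_zero
  have hTm : T (m + 1) = 0 := by
    simp [hT, Nat.descFactorial_eq_zero_iff_lt.2 (Nat.lt_succ_self m)]
  rw [hT0, hTm]
  ring

theorem stmt_17 {α : Type*} [Fintype α] [DecidableEq α]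
    (hn : 2 ≤ Fintype.card α)
    (S : Finset α) (m : ℕ) (hm : S.card = m) (hm1 : 1 ≤ m) (hm2 : m ≤ Fintype.card α - 1)
    (a : α) (ha : a ∉ S) :
    ∑ X ∈ univ.powerset.filter
        (fun X => a ∈ X ∧ 2 ≤ X.card ∧ X.erase a ⊆ S ∧ (X.erase a).Nonempty),
      (((X.card - 1).factorial * (Fintype.card α - X.card).factorial : ℚ) /
        (Fintype.card α).factorial) =
    1 / ((Fintype.card α - m : ℕ) : ℚ) - 1 / (Fintype.card α : ℚ) := by
  set n := Fintype.card α with hn'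
  have hmn : m < n := by omega
  -- Step 1: bijection X ↦ X.erase a
  have step1 :
      ∑ X ∈ univ.powerset.filter
          (fun X => a ∈ X ∧ 2 ≤ X.card ∧ X.erase a ⊆ S ∧ (X.erase a).Nonempty),
        (((X.card - 1).factorial * (n - X.card).factorial : ℚ) / n.factorial)
      = ∑ Y ∈ S.powerset.filter (fun Y => Y.Nonempty),
        ((Y.card.factorial * (n - 1 - Y.card).factorial : ℚ) / n.factorial) := by
    refine Finset.sum_bij' (fun X _ => X.erase a) (fun Y _ => insert a Y) ?_ ?_ ?_ ?_ ?_
    · intro X hX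
      simp only [mem_filter, mem_powerset] at hX ⊢
      exact ⟨hX.2.2.2.1, hX.2.2.2.2⟩
    · intro Y hY
      simp only [mem_filter, mem_powerset] at hY ⊢
      have haY : a ∉ Y := fun h => ha (hY.1 h)
      refine ⟨subset_univ _, mem_insert_self _ _, ?_, ?_, ?_⟩
      · rw [card_insert_of_notMem haY]
        have := hY.2.card_pos; omega
      · rw [erase_insert haY]; exact hY.1
      · rw [erase_insert haY]; exact hY.2
    · intro X hX
      simp only [mem_filter, mem_powerset] at hX
      exact insert_erase hX.2.1
    · intro Y hY
      simp only [mem_filter, mem_powerset] at hY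
      exact erase_insert (fun h => ha (hY.1 h))
    · intro X hX
      simp only [mem_filter, mem_powerset] at hX
      rw [card_erase_of_mem hX.2.1]
      have h2X := hX.2.2.1
      have hx : n - X.card = n - 1 - (X.card - 1) := by omega
      rw [hx]
  rw [step1]
  -- Step 2: add the empty set term
  set g : Finset α → ℚ :=
    fun Y => ((Y.card.factorial * (n - 1 - Y.card).factorial : ℚ) / n.factorial) with hg
  have hsplit : ∑ Y ∈ S.powerset, g Y
      = g ∅ + ∑ Y ∈ S.powerset.filter (fun Y => Y.Nonempty), g Y := by
    rw [← Finset.sum_filter_add_sum_filter_not S.powerset (fun Y => Y.Nonempty)]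
    have : S.powerset.filter (fun Y => ¬ Y.Nonempty) = {∅} := by
      ext Y
      simp [Finset.not_nonempty_iff_eq_empty]
      rintro rfl; exact empty_subset S
    rw [this, Finset.sum_singleton]
    ring
  have hempty : g ∅ = 1 / (n : ℚ) := by
    simp only [hg, card_empty, Nat.factorial_zero, Nat.cast_one, one_mul, Nat.sub_zero]
    have h1 : n.factorial = n * (n - 1).factorial := by
      have : n = (n - 1) + 1 := by omega
      rw [this, Nat.factorial_succ]; congr 1 <;> omega
    rw [h1]
    have h2 : (0 : ℚ) < ((n - 1).factorial : ℚ) := by exact_mod_cast (n - 1).factorial_pos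
    have h3 : (0 : ℚ) < (n : ℚ) := by positivity
    push_cast
    field_simp
  -- Step 3: sum over powerset by cardinality
  have hpow : ∑ Y ∈ S.powerset, g Y
      = ∑ k ∈ range (m + 1),
          ((m.choose k * k.factorial * (n - 1 - k).factorial : ℚ) / n.factorial) := by
    have := Finset.sum_powerset_apply_card
      (fun k => ((k.factorial * (n - 1 - k).factorial : ℚ) / n.factorial)) (x := S)
    rw [hm] at this
    rw [hg]
    simp only at this ⊢
    rw [this]
    refine Finset.sum_congr rfl fun k _ => ?_
    rw [nsmul_eq_mul]
    push_cast
    ring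
  have key := key_sum n m hmn
  rw [hpow, key] at hsplit
  rw [hempty] at hsplit
  linarith [hsplit]
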